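/- arXiv:1311.3270 — 2 statements merged into one kernel-verified Lean document; each statement's English description precedes it below -/
import Mathlib

section
/- For the 5-dimensional Lie algebra g above, the closed 1-form α2 satisfies the Lefschetz annihilation condition (dα5)^2 ∧ α2 = 0 and the interior product i_{X5} α2 = 0, yet the 4-cochain α5 ∧ dα5 ∧ α2 is exact while [α2] ≠ 0 in H^1(g). Hence the Lefschetz relation R_{Lef_1} for (g, α5) is not the graph of an injective map. -/
/-- The bracket of the 5-dimensional nilpotent Lie algebra `g`:
`[X1,X2]=X3, [X1,X3]=X4, [X1,X4]=X5, [X2,X3]=X5`. -/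
def bracket5 (x y : Fin 5 → ℝ) : Fin 5 → ℝ :=
  ![0, 0, x 0 * y 1 - x 1 * y 0, x 0 * y 2 - x 2 * y 0,
    (x 0 * y 3 - x 3 * y 0) + (x 1 * y 2 - x 2 * y 1)]

/-- The dual basis 1-forms `α1,…,α5`, viewed in the exterior algebra `Λ g*`. -/
noncomputable def a5 (i : Fin 5) : ExteriorAlgebra ℝ (Module.Dual ℝ (Fin 5 → ℝ)) :=
  ExteriorAlgebra.ι ℝ (LinearMap.proj i)

/-- `dα5 = α1∧α4 + α2∧α3`. -/
noncomputable def da5 : ExteriorAlgebra ℝ (Module.Dual ℝ (Fin 5 → ℝ)) :=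
  a5 0 * a5 3 + a5 1 * a5 2

/-- The Chevalley-Eilenberg differential on an arbitrary 1-form `β = Σ cᵢ αᵢ`, expressed in
the exterior algebra: `dβ = c₃ dα3 + c₄ dα4 + c₅ dα5` (since `dα1 = dα2 = 0`). -/
noncomputable def D1 (β : Module.Dual ℝ (Fin 5 → ℝ)) :
    ExteriorAlgebra ℝ (Module.Dual ℝ (Fin 5 → ℝ)) :=
  β ![0, 0, 1, 0, 0] • (-(a5 0 * a5 1)) + β ![0, 0, 0, 1, 0] • (-(a5 0 * a5 2)) +
    β ![0, 0, 0, 0, 1] • da5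

/-- The set of differentials of decomposable 3-cochains (whose span is the space of exact
4-cochains), via the derivation rule `d(β∧γ∧δ) = dβ∧γ∧δ - β∧dγ∧δ + β∧γ∧dδ`. -/
noncomputable def exact4 : Set (ExteriorAlgebra ℝ (Module.Dual ℝ (Fin 5 → ℝ))) :=
  {x | ∃ β γ δ : Module.Dual ℝ (Fin 5 → ℝ),
    x = D1 β * ExteriorAlgebra.ι ℝ γ * ExteriorAlgebra.ι ℝ δ
      - ExteriorAlgebra.ι ℝ β * D1 γ * ExteriorAlgebra.ι ℝ δ
      + ExteriorAlgebra.ι ℝ β * ExteriorAlgebra.ι ℝ γ * D1 δ}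

lemma sq5 (i : Fin 5) : a5 i * a5 i = 0 := ExteriorAlgebra.ι_sq_zero _

lemma sw5 (i j : Fin 5) : a5 i * a5 j = -(a5 j * a5 i) :=
  eq_neg_of_add_eq_zero_left (ExteriorAlgebra.ι_add_mul_swap _ _)

lemma sq5' (i : Fin 5) (x : ExteriorAlgebra ℝ (Module.Dual ℝ (Fin 5 → ℝ))) :
    a5 i * (a5 i * x) = 0 := by rw [← mul_assoc, sq5, zero_mul]

lemma sw5' (i j : Fin 5) (x : ExteriorAlgebra ℝ (Module.Dual ℝ (Fin 5 → ℝ))) :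
    a5 i * (a5 j * x) = -(a5 j * (a5 i * x)) := by
  rw [← mul_assoc, sw5, neg_mul, mul_assoc]

set_option maxHeartbeats 1000000 in

/-- The closed 1-form `α2` satisfies `i_{X5} α2 = 0` and `(dα5)² ∧ α2 = 0`, its class in
`H¹(g)` is non-zero (i.e. `α2 ≠ 0`, as there are no exact 1-cochains), yet
`α5 ∧ dα5 ∧ α2` is exact. Hence the Lefschetz relation `R_{Lef₁}` for `(g, α5)` is not
the graph of an injective map. -/
theorem stmt7 :
    (∀ X Y, (LinearMap.proj 1 : Module.Dual ℝ (Fin 5 → ℝ)) (bracket5 X Y) = 0) ∧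
    (LinearMap.proj 1 : Module.Dual ℝ (Fin 5 → ℝ)) ![0, 0, 0, 0, 1] = 0 ∧
    da5 * da5 * a5 1 = 0 ∧
    (LinearMap.proj 1 : Module.Dual ℝ (Fin 5 → ℝ)) ≠ 0 ∧
    a5 4 * da5 * a5 1 ∈ Submodule.span ℝ exact4 := by
  refine ⟨fun X Y => rfl, rfl, ?_, ?_, ?_⟩
  · simp only [da5, mul_add, add_mul, mul_assoc]
    simp [sq5, sq5', sw5 1 0, sw5 2 0, sw5 2 1, sw5 3 0, sw5 3 1, sw5 3 2, sw5 4 0,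
      sw5 4 1, sw5 4 2, sw5 4 3, sw5' 1 0, sw5' 2 0, sw5' 2 1, sw5' 3 0, sw5' 3 1,
      sw5' 3 2, sw5' 4 0, sw5' 4 1, sw5' 4 2, sw5' 4 3, mul_neg, neg_mul, mul_add, add_mul]
  · intro h
    have := congrFun (congrArg (fun f : Module.Dual ℝ (Fin 5 → ℝ) => f.toFun)
      h) ![0, 1, 0, 0, 0]
    simp [LinearMap.proj] at this
  · have hx : (D1 (LinearMap.proj 2) * a5 3 * a5 4 - a5 2 * D1 (LinearMap.proj 3) * a5 4
      + a5 2 * a5 3 * D1 (LinearMap.proj 4)) ∈ exact4 :=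
      ⟨LinearMap.proj 2, LinearMap.proj 3, LinearMap.proj 4, by rfl⟩
    have hm := Submodule.smul_mem (Submodule.span ℝ exact4) (-1 : ℝ)
      (Submodule.subset_span hx)
    have h2 : D1 (LinearMap.proj 2) = -(a5 0 * a5 1) := by
      simp [D1, LinearMap.proj]
    have h3 : D1 (LinearMap.proj 3) = -(a5 0 * a5 2) := by
      simp [D1, LinearMap.proj]
    have h4 : D1 (LinearMap.proj 4) = da5 := by
      simp [D1, LinearMap.proj]
    have key : a5 4 * da5 * a5 1 = (-1 : ℝ) •
        (D1 (LinearMap.proj 2) * a5 3 * a5 4 - a5 2 * D1 (LinearMap.proj 3) * a5 4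
          + a5 2 * a5 3 * D1 (LinearMap.proj 4)) := by
      rw [h2, h3, h4]
      simp only [da5, mul_add, add_mul, mul_assoc, smul_add, smul_sub, smul_neg, neg_mul,
        mul_neg, neg_smul, one_smul]
      simp [sq5, sq5', sw5 1 0, sw5 2 0, sw5 2 1, sw5 3 0, sw5 3 1, sw5 3 2, sw5 4 0,
        sw5 4 1, sw5 4 2, sw5 4 3, sw5' 1 0, sw5' 2 0, sw5' 2 1, sw5' 3 0, sw5' 3 1,
        sw5' 3 2, sw5' 4 0, sw5' 4 1, sw5' 4 2, sw5' 4 3, mul_neg, neg_mul, mul_add, add_mul]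
    rw [key]
    exact hm
    -- dead code below removed
end

section
/- The multiplication on R^5 given by (x)·(y) = (x1+y1, x2+y2, x3+y3+x1y2, x4+y4+x1y3+(x1²/2)y2, x5+y5-x1y4-((x1²/2)+x2)y3-(x1/2)y2²-((x1³/6)+x1x2)y2) is associative with identity 0, and every element has an inverse, so it makes R^5 a group. -/
/-- The multiplication on ℝ⁵ of the simply connected nilpotent Lie group `G`. -/
noncomputable def mul5 (x y : ℝ × ℝ × ℝ × ℝ × ℝ) : ℝ × ℝ × ℝ × ℝ × ℝ :=
  ⟨x.1 + y.1,
   x.2.1 + y.2.1,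
   x.2.2.1 + y.2.2.1 + x.1 * y.2.1,
   x.2.2.2.1 + y.2.2.2.1 + x.1 * y.2.2.1 + (x.1 ^ 2 / 2) * y.2.1,
   x.2.2.2.2 + y.2.2.2.2 - x.1 * y.2.2.2.1 - (x.1 ^ 2 / 2 + x.2.1) * y.2.2.1
     - (x.1 / 2) * y.2.1 ^ 2 - (x.1 ^ 3 / 6 + x.1 * x.2.1) * y.2.1⟩

/-- `mul5` is associative, has identity `(0,0,0,0,0)` and every element is invertible, so it
makes ℝ⁵ a group. -/
theorem stmt10 :
    (∀ a b c, mul5 (mul5 a b) c = mul5 a (mul5 b c)) ∧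
    (∀ a, mul5 ⟨0, 0, 0, 0, 0⟩ a = a ∧ mul5 a ⟨0, 0, 0, 0, 0⟩ = a) ∧
    (∀ a, ∃ b, mul5 a b = ⟨0, 0, 0, 0, 0⟩ ∧ mul5 b a = ⟨0, 0, 0, 0, 0⟩) := by
  refine ⟨fun a b c => ?_, fun a => ⟨?_, ?_⟩, fun a => ?_⟩
  · obtain ⟨a1, a2, a3, a4, a5⟩ := a
    obtain ⟨b1, b2, b3, b4, b5⟩ := b
    obtain ⟨c1, c2, c3, c4, c5⟩ := c
    simp only [mul5, Prod.mk.injEq]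
    refine ⟨by ring, by ring, by ring, by ring, by ring⟩
  · obtain ⟨a1, a2, a3, a4, a5⟩ := a
    simp only [mul5, Prod.mk.injEq]
    refine ⟨by ring, by ring, by ring, by ring, by ring⟩
  · obtain ⟨a1, a2, a3, a4, a5⟩ := a
    simp only [mul5, Prod.mk.injEq]
    refine ⟨by ring, by ring, by ring, by ring, by ring⟩
  · obtain ⟨a1, a2, a3, a4, a5⟩ := a
    refine ⟨⟨-a1, -a2, -a3 + a1 * a2, -a4 + a1 * a3 - a1 ^ 2 * a2 / 2,
      -a5 + a1 * (-a4 + a1 * a3 - a1 ^ 2 * a2 / 2) + (a1 ^ 2 / 2 + a2) * (-a3 + a1 * a2)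
        + (a1 / 2) * a2 ^ 2 - (a1 ^ 3 / 6 + a1 * a2) * a2⟩, ?_, ?_⟩ <;>
    · simp only [mul5, Prod.mk.injEq]
      refine ⟨by ring, by ring, by ring, by ring, by ring⟩
end
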